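/- Let a > 0 and b > 0. Then the function x ↦ g''(a·f(x))/x² is integrable on (0,b). -/

import Mathlib

open Real Set MeasureTheory

/-- `g(t) = arccos(1/t) / √(1 − 1/t²)`. -/
noncomputable def gFun (t : ℝ) : ℝ := Real.arccos (1/t) / Real.sqrt (1 - 1/t^2)

/-- The function `y ↦ π/(√(y²−1) − arccos(1/y))`, a strictly decreasing bijection
from `(1,∞)` onto `(0,∞)`. -/
noncomputable def sigmaF (y : ℝ) : ℝ :=
  Real.pi / (Real.sqrt (y^2 - 1) - Real.arccos (1/y))

noncomputable def gOne (t : ℝ) : ℝ :=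
  (t^2 - 1)⁻¹ - Real.arccos (1/t) / (Real.sqrt (t^2 - 1))^3

noncomputable def gTwo (t : ℝ) : ℝ :=
  3*t*Real.arccos (1/t) / ((t^2-1)^2 * Real.sqrt (t^2-1)) - 2*t/(t^2-1)^2 - 1/(t*(t^2-1)^2)

lemma sq_sub_one_pos {t : ℝ} (ht : 1 < t) : 0 < t^2 - 1 := by nlinarith

lemma sqrt_one_sub_inv_sq {t : ℝ} (ht : 1 < t) :
    Real.sqrt (1 - 1/t^2) = Real.sqrt (t^2 - 1) / t := by
  have ht0 : (0:ℝ) < t := by linarith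
  have hs2 : (Real.sqrt (t^2-1))^2 = t^2 - 1 := Real.sq_sqrt (sq_sub_one_pos ht).le
  have : 1 - 1/t^2 = (Real.sqrt (t^2-1) / t)^2 := by
    rw [div_pow, hs2]; field_simp
  rw [this, Real.sqrt_sq (by positivity)]

lemma hasDerivAt_arccos_inv {t : ℝ} (ht : 1 < t) :
    HasDerivAt (fun y : ℝ => Real.arccos (1/y)) (1/(t * Real.sqrt (t^2-1))) t := by
  have ht0 : (0:ℝ) < t := by linarith
  have hs : 0 < Real.sqrt (t^2-1) := Real.sqrt_pos.2 (sq_sub_one_pos ht)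
  have h1 : (1:ℝ)/t ≠ -1 := by
    have : (0:ℝ) < 1/t := by positivity
    linarith
  have h2 : (1:ℝ)/t ≠ 1 := by
    have : (1:ℝ)/t < 1 := by rw [div_lt_one ht0]; exact ht
    linarith
  have hinv : HasDerivAt (fun y : ℝ => 1/y) (-(1/t^2)) t := by
    simpa [one_div] using hasDerivAt_inv (ne_of_gt ht0)
  have := (Real.hasDerivAt_arccos h1 h2).comp t hinv
  refine this.congr_deriv ?_
  rw [show (1 - (1/t)^2) = 1 - 1/t^2 by ring, sqrt_one_sub_inv_sq ht]
  field_simp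

lemma hasDerivAt_sqrt_sq_sub_one {t : ℝ} (ht : 1 < t) :
    HasDerivAt (fun y : ℝ => Real.sqrt (y^2 - 1)) (t / Real.sqrt (t^2-1)) t := by
  have hs : 0 < Real.sqrt (t^2-1) := Real.sqrt_pos.2 (sq_sub_one_pos ht)
  have hq : HasDerivAt (fun y : ℝ => y^2 - 1) (2*t) t := by
    simpa using (hasDerivAt_pow 2 t).sub_const 1
  have := (Real.hasDerivAt_sqrt (sq_sub_one_pos ht).ne').comp t hq
  refine this.congr_deriv ?_
  field_simp

lemma hasDerivAt_gFun {t : ℝ} (ht : 1 < t) : HasDerivAt gFun (gOne t) t := by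
  have ht0 : (0:ℝ) < t := by linarith
  have hpos := sq_sub_one_pos ht
  have hs : 0 < Real.sqrt (t^2-1) := Real.sqrt_pos.2 hpos
  have hs2 : (Real.sqrt (t^2-1))^2 = t^2 - 1 := Real.sq_sqrt hpos.le
  have hone : 0 < 1 - 1/t^2 := by
    have : (1:ℝ)/t^2 < 1 := by rw [div_lt_one (by positivity)]; nlinarith
    linarith
  have hq : HasDerivAt (fun y : ℝ => 1 - 1/y^2) (2/t^3) t := by
    have h1 : HasDerivAt (fun y : ℝ => y^2) (2*t) t := by simpa using hasDerivAt_pow 2 t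
    have h2 := (h1.inv (by positivity)).const_sub 1
    have h3 : HasDerivAt (fun y : ℝ => 1 - 1/y^2) (-(-(2*t) / (t^2)^2)) t := by
      simpa [one_div] using h2
    refine h3.congr_deriv ?_
    field_simp
  have hsq : HasDerivAt (fun y : ℝ => Real.sqrt (1 - 1/y^2)) ((1/(2*Real.sqrt (1-1/t^2))) * (2/t^3)) t :=
    (Real.hasDerivAt_sqrt hone.ne').comp t hq
  have hdiv := (hasDerivAt_arccos_inv ht).div hsq (by
    rw [sqrt_one_sub_inv_sq ht]; positivity)
  have hgf : gFun = fun y : ℝ => Real.arccos (1/y) / Real.sqrt (1 - 1/y^2) := rfl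
  rw [hgf]
  refine hdiv.congr_deriv ?_
  rw [sqrt_one_sub_inv_sq ht, gOne]
  have harc : Real.arccos (1/t) = Real.arccos (1/t) := rfl
  set A := Real.arccos (1/t) with hA
  set s := Real.sqrt (t^2-1) with hsdef
  field_simp
  linear_combination (-s) * hs2

lemma hasDerivAt_gOne {t : ℝ} (ht : 1 < t) : HasDerivAt gOne (gTwo t) t := by
  have ht0 : (0:ℝ) < t := by linarith
  have hpos := sq_sub_one_pos ht
  have hs : 0 < Real.sqrt (t^2-1) := Real.sqrt_pos.2 hpos
  have hs2 : (Real.sqrt (t^2-1))^2 = t^2 - 1 := Real.sq_sqrt hpos.le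
  have hsne : Real.sqrt (t^2-1) ≠ 0 := hs.ne'
  have htne : t ≠ 0 := ht0.ne'
  have c1 : HasDerivAt (fun y : ℝ => (y^2-1)⁻¹) (-(2*t)/(t^2-1)^2) t := by
    have h1 : HasDerivAt (fun y : ℝ => y^2 - 1) (2*t) t := by
      simpa using (hasDerivAt_pow 2 t).sub_const 1
    exact h1.inv hpos.ne'
  have c3 : HasDerivAt (fun y : ℝ => (Real.sqrt (y^2-1))^3) (3*Real.sqrt (t^2-1)*t) t := by
    have h3 := (hasDerivAt_sqrt_sq_sub_one ht).pow 3
    refine h3.congr_deriv ?_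
    push_cast
    field_simp
  have c2 := (hasDerivAt_arccos_inv ht).div c3 (by positivity)
  have hsum := c1.sub c2
  refine hsum.congr_deriv ?_
  rw [gTwo]
  obtain ⟨u, hu0, hu2, hur⟩ : ∃ u : ℝ, 0 < u ∧ u^2 = t^2-1 ∧ u = Real.sqrt (t^2-1) :=
    ⟨_, hs, hs2, rfl⟩
  rw [← hur, ← hu2]
  have hune := hu0.ne'
  field_simp
  ring

lemma deriv_deriv_gFun {t : ℝ} (ht : 1 < t) : deriv (deriv gFun) t = gTwo t := by
  have hev : deriv gFun =ᶠ[nhds t] gOne := by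
    filter_upwards [Ioi_mem_nhds ht] with u hu
    exact (hasDerivAt_gFun hu).deriv
  rw [hev.deriv_eq]
  exact (hasDerivAt_gOne ht).deriv

lemma deriv_deriv_gFun_zero {t : ℝ} (h0 : 0 < t) (h1 : t < 1) :
    deriv (deriv gFun) t = 0 := by
  have hg : ∀ u : ℝ, u ∈ Ioo (0:ℝ) 1 → gFun u = 0 := by
    intro u hu
    have h1u : (1:ℝ) ≤ 1/u := (one_le_div hu.1).2 hu.2.le
    show Real.arccos (1/u) / Real.sqrt (1 - 1/u^2) = 0
    rw [Real.arccos_eq_zero.2 h1u, zero_div]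
  have hd : ∀ u : ℝ, u ∈ Ioo (0:ℝ) 1 → deriv gFun u = 0 := by
    intro u hu
    have hev : gFun =ᶠ[nhds u] (fun _ => 0) := by
      filter_upwards [Ioo_mem_nhds hu.1 hu.2] with v hv
      exact hg v hv
    rw [hev.deriv_eq]
    simp
  have hev2 : deriv gFun =ᶠ[nhds t] (fun _ => 0) := by
    filter_upwards [Ioo_mem_nhds h0 h1] with v hv
    exact hd v hv
  rw [hev2.deriv_eq]
  simp

noncomputable def hFun (y : ℝ) : ℝ := Real.sqrt (y^2-1) - Real.arccos (1/y)

lemma sigmaF_eq (y : ℝ) : sigmaF y = Real.pi / hFun y := rfl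

lemma hasDerivAt_hFun {y : ℝ} (hy : 1 < y) :
    HasDerivAt hFun (Real.sqrt (y^2-1)/y) y := by
  have hy0 : (0:ℝ) < y := by linarith
  have hs : 0 < Real.sqrt (y^2-1) := Real.sqrt_pos.2 (sq_sub_one_pos hy)
  have hs2 : (Real.sqrt (y^2-1))^2 = y^2-1 := Real.sq_sqrt (sq_sub_one_pos hy).le
  have := (hasDerivAt_sqrt_sq_sub_one hy).sub (hasDerivAt_arccos_inv hy)
  have hg : hFun = fun z : ℝ => Real.sqrt (z^2-1) - Real.arccos (1/z) := rfl
  rw [hg]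
  refine this.congr_deriv ?_
  obtain ⟨u, hu0, hu2, hur⟩ : ∃ u : ℝ, 0 < u ∧ u^2 = y^2-1 ∧ u = Real.sqrt (y^2-1) :=
    ⟨_, hs, hs2, rfl⟩
  rw [← hur]
  have hune := hu0.ne'
  field_simp
  linear_combination (-1) * hu2

lemma hFun_continuousOn : ContinuousOn hFun (Ici 1) := by
  apply ContinuousOn.sub
  · exact (Real.continuous_sqrt.comp (by continuity)).continuousOn
  · exact Real.continuous_arccos.comp_continuousOn
      (continuousOn_const.div continuousOn_id (fun y hy =>
        (lt_of_lt_of_le one_pos hy).ne'))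

lemma hFun_strictMonoOn : StrictMonoOn hFun (Ici 1) := by
  apply strictMonoOn_of_deriv_pos (convex_Ici 1) hFun_continuousOn
  intro y hy
  rw [interior_Ici] at hy
  have hy1 : (1:ℝ) < y := hy
  rw [(hasDerivAt_hFun hy1).deriv]
  have hs : 0 < Real.sqrt (y^2-1) := Real.sqrt_pos.2 (sq_sub_one_pos hy1)
  exact div_pos hs (by linarith)

lemma hFun_pos {y : ℝ} (hy : 1 < y) : 0 < hFun y := by
  have h0 : hFun 1 = 0 := by simp [hFun, Real.arccos_one]
  have := hFun_strictMonoOn self_mem_Ici (mem_Ici.2 hy.le) hy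
  rw [h0] at this
  exact this

lemma hFun_lt_self {y : ℝ} (hy : 1 < y) : hFun y < y := by
  have h1 : Real.sqrt (y^2-1) < y := by
    rw [Real.sqrt_lt' (by linarith)]
    linarith
  have h2 := Real.arccos_nonneg (1/y)
  simp only [hFun]
  linarith

lemma hasDerivAt_P (θ : ℝ) :
    HasDerivAt (fun u : ℝ => 3*u*Real.cos u - 3*Real.sin u + Real.sin u^3)
      (3*Real.sin θ*(Real.sin θ*Real.cos θ - θ)) θ := by
  have h1 : HasDerivAt (fun u : ℝ => 3*u) (3:ℝ) θ := by
    simpa using (hasDerivAt_id θ).const_mul (3:ℝ)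
  have h2 := h1.mul (Real.hasDerivAt_cos θ)
  have h3 := (Real.hasDerivAt_sin θ).const_mul (3:ℝ)
  have h4 := (Real.hasDerivAt_sin θ).pow 3
  refine ((h2.sub h3).add h4).congr_deriv ?_
  push_cast
  ring

lemma P_bound {θ : ℝ} (h0 : 0 ≤ θ) (h2 : θ ≤ 1/2) :
    |3*θ*Real.cos θ - 3*Real.sin θ + Real.sin θ^3| ≤ θ^5 := by
  have main : ∀ c : ℝ, |c| = 1 →
      MonotoneOn (fun u : ℝ => u^5 + c*(3*u*Real.cos u - 3*Real.sin u + Real.sin u^3))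
        (Icc (0:ℝ) (1/2)) := by
    intro c hc
    apply monotoneOn_of_deriv_nonneg (convex_Icc 0 (1/2))
    · exact (Continuous.continuousOn (by continuity))
    · intro u _
      exact (((hasDerivAt_pow 5 u).add ((hasDerivAt_P u).const_mul c)).differentiableAt).differentiableWithinAt
    · intro u hu
      rw [interior_Icc] at hu
      have hd := (hasDerivAt_pow 5 u).add ((hasDerivAt_P u).const_mul c)
      rw [show deriv (fun u : ℝ => u^5 + c*(3*u*Real.cos u - 3*Real.sin u + Real.sin u^3)) u = _ from hd.deriv]
      have hu0 := hu.1
      have hu2 : u ≤ 1/2 := hu.2.le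
      have hsle : Real.sin u ≤ u := (Real.sin_lt hu0).le
      have hsnn : 0 ≤ Real.sin u :=
        Real.sin_nonneg_of_nonneg_of_le_pi hu0.le (by nlinarith [Real.pi_gt_three])
      have h2u : Real.sin (2*u) ≤ 2*u := (Real.sin_lt (by linarith)).le
      have h2l : 2*u - (2*u)^3/4 < Real.sin (2*u) := by
        have := Real.sin_gt_sub_cube (x := 2*u) (by linarith)
        linarith [pow_pos (by linarith : (0:ℝ) < 2*u) 3]
      rw [Real.sin_two_mul] at h2u h2l
      have habs : |Real.sin u * Real.cos u - u| ≤ u^3 := by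
        rw [abs_le]
        constructor <;> nlinarith
      have hXbound : |3*Real.sin u*(Real.sin u*Real.cos u - u)| ≤ 3*u^4 := by
        rw [abs_mul]
        have h3s : |3*Real.sin u| = 3*Real.sin u := abs_of_nonneg (by linarith)
        rw [h3s]
        nlinarith [habs, abs_nonneg (Real.sin u * Real.cos u - u)]
      have hcx : -(3*u^4) ≤ c * (3*Real.sin u*(Real.sin u*Real.cos u - u)) := by
        have hna := neg_abs_le (c * (3*Real.sin u*(Real.sin u*Real.cos u - u)))
        rw [abs_mul, hc, one_mul] at hna
        linarith [hXbound]
      push_cast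
      nlinarith [pow_nonneg hu0.le 4]
  have hmem0 : (0:ℝ) ∈ Icc (0:ℝ) (1/2) := by constructor <;> norm_num
  have hmemθ : θ ∈ Icc (0:ℝ) (1/2) := ⟨h0, h2⟩
  have e1 := main 1 (by norm_num) hmem0 hmemθ h0
  have e2 := main (-1) (by norm_num) hmem0 hmemθ h0
  norm_num [Real.sin_zero] at e1 e2
  rw [abs_le]
  constructor <;> linarith [e1, e2]

set_option maxHeartbeats 2000000 in
lemma gTwo_bound {t : ℝ} (ht : 1 < t) : |gTwo t| ≤ 1000/t^2 := by
  have ht0 : (0:ℝ) < t := by linarith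
  have hpos := sq_sub_one_pos ht
  have hs : 0 < Real.sqrt (t^2-1) := Real.sqrt_pos.2 hpos
  have hs2 : (Real.sqrt (t^2-1))^2 = t^2-1 := Real.sq_sqrt hpos.le
  have hθpos : 0 < Real.arccos (1/t) := Real.arccos_pos.2 (by rw [div_lt_one ht0]; exact ht)
  have hθnn := Real.arccos_nonneg (1/t)
  by_cases hsmall : t ≤ 9/8
  · -- small t : use the P bound
    have hm1 : (-1:ℝ) ≤ 1/t := by
      have h1t : (0:ℝ) ≤ 1/t := by positivity
      linarith
    have hcos : Real.cos (Real.arccos (1/t)) = 1/t :=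
      Real.cos_arccos hm1 ((div_le_one ht0).2 ht.le)
    have hsin : Real.sin (Real.arccos (1/t)) = Real.sqrt (t^2-1)/t := by
      rw [Real.sin_arccos, show 1-(1/t)^2 = 1 - 1/t^2 by ring, sqrt_one_sub_inv_sq ht]
    set θ := Real.arccos (1/t) with hθdef
    have hθπ : θ ≤ Real.pi := Real.arccos_le_pi _
    have hθhalf : θ ≤ 1/2 := by
      by_contra hcon
      push_neg at hcon
      have hc2 : Real.cos θ < Real.cos (1/2) :=
        Real.cos_lt_cos_of_nonneg_of_le_pi (by norm_num) hθπ hcon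
      have hcb : Real.cos (1/2) ≤ 1349/1536 := by
        have habs12 : |(1:ℝ)/2| ≤ 1 := abs_le.2 ⟨by norm_num, by norm_num⟩
        have hbnd := (abs_le.1 (Real.cos_bound (x := (1:ℝ)/2) habs12)).2
        rw [abs_of_pos (by norm_num : (0:ℝ) < (1:ℝ)/2)] at hbnd
        norm_num at hbnd
        linarith
      have h89 : (8:ℝ)/9 ≤ 1/t := by
        rw [le_div_iff₀ ht0]
        linarith
      rw [hcos] at hc2
      linarith
    have hθ1 : θ ≤ 1 := by linarith
    have hsinlb : (15/16)*θ ≤ Real.sin θ := by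
      have hcube := Real.sin_gt_sub_cube hθpos
      nlinarith [hcube, mul_nonneg hθnn (show (0:ℝ) ≤ 1/4 - θ^2 by nlinarith)]
    have hsinub : Real.sin θ ≤ θ := (Real.sin_lt hθpos).le
    have hP := P_bound hθpos.le hθhalf
    have hid : gTwo t = t^2*(3*θ*Real.cos θ - 3*Real.sin θ + Real.sin θ^3)
        / (Real.sqrt (t^2-1))^5 := by
      rw [gTwo, hcos, hsin]
      obtain ⟨u, hu0, hu2, hur⟩ : ∃ u : ℝ, 0 < u ∧ u^2 = t^2-1 ∧ u = Real.sqrt (t^2-1) :=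
        ⟨_, hs, hs2, rfl⟩
      rw [← hur, ← hu2]
      have hune := hu0.ne'
      rw [← hθdef]
      field_simp
      linear_combination (-u) * hu2
    rw [hid, abs_div, abs_of_pos (pow_pos hs 5), abs_mul, abs_of_pos (pow_pos ht0 2)]
    rw [div_le_div_iff₀ (pow_pos hs 5) (pow_pos ht0 2)]
    -- t^2 * |P| * t^2 ≤ 1000 * s^5
    have hst : Real.sqrt (t^2-1) = t * Real.sin θ := by
      rw [hsin]
      field_simp
    have h5 : ((15/16)*t*θ)^5 ≤ (Real.sqrt (t^2-1))^5 := by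
      apply pow_le_pow_left₀ (by positivity)
      rw [hst]
      nlinarith
    have hPt : t^2 * |3*θ*Real.cos θ - 3*Real.sin θ + Real.sin θ^3| * t^2 ≤ t^4 * θ^5 := by
      nlinarith [hP, pow_pos ht0 4, abs_nonneg (3*θ*Real.cos θ - 3*Real.sin θ + Real.sin θ^3)]
    have hfin : t^4 * θ^5 ≤ 1000 * (Real.sqrt (t^2-1))^5 := by
      nlinarith [h5, mul_nonneg (mul_nonneg (pow_nonneg ht0.le 4) (pow_nonneg hθpos.le 5))
        (sub_nonneg.2 ht.le)]
    linarith
  · -- large t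
    push_neg at hsmall
    have hθle : Real.arccos (1/t) ≤ 4 :=
      le_trans (Real.arccos_le_pi _) (by linarith [Real.pi_lt_d2])
    have h17 : (17/81)*t^2 ≤ t^2 - 1 := by nlinarith
    have hslb : (2/5)*t ≤ Real.sqrt (t^2-1) := by
      have h1 := Real.sqrt_le_sqrt (show ((2/5)*t)^2 ≤ t^2-1 by nlinarith)
      rwa [Real.sqrt_sq (by positivity)] at h1
    have e1 : ((17/81)*t^2)^2 ≤ (t^2-1)^2 := by
      apply pow_le_pow_left₀ (by positivity) h17
    have eprod : ((17/81)*t^2)^2 * ((2/5)*t) ≤ (t^2-1)^2 * Real.sqrt (t^2-1) :=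
      mul_le_mul e1 hslb (by positivity) (by positivity)
    have h64 : (81:ℝ)/64 ≤ t^2 := by nlinarith
    have hT1 : 3*t*Real.arccos (1/t) / ((t^2-1)^2 * Real.sqrt (t^2-1)) ≤ 600/t^2 := by
      rw [div_le_div_iff₀ (by positivity) (by positivity)]
      have b1 : 3*t*Real.arccos (1/t)*t^2 ≤ 12*t^3 := by
        nlinarith [mul_nonneg (pow_nonneg ht0.le 3) (sub_nonneg.2 hθle)]
      have b3 : 12*t^3 ≤ 600*(((17/81)*t^2)^2*((2/5)*t)) := by
        nlinarith [mul_nonneg (pow_nonneg ht0.le 3) (sub_nonneg.2 h64)]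
      linarith [b1, b3, eprod]
    have hT2 : 2*t/(t^2-1)^2 ≤ 100/t^2 := by
      rw [div_le_div_iff₀ (by positivity) (by positivity)]
      have c2 : 2*t*t^2 ≤ 100*((17/81)*t^2)^2 := by
        nlinarith [mul_nonneg (pow_nonneg ht0.le 3) (sub_nonneg.2 ht.le)]
      linarith [c2, e1]
    have hT3 : 1/(t*(t^2-1)^2) ≤ 100/t^2 := by
      rw [div_le_div_iff₀ (by positivity) (by positivity)]
      have c1 : 100*t*((17/81)*t^2)^2 ≤ 100*t*(t^2-1)^2 :=
        mul_le_mul_of_nonneg_left e1 (by positivity)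
      have c2 : 1*t^2 ≤ 100*t*((17/81)*t^2)^2 := by
        nlinarith [mul_nonneg (sq_nonneg t) (sub_nonneg.2 (show (1:ℝ) ≤ t^3 by nlinarith))]
      linarith [c1, c2]
    have hT1nn : 0 ≤ 3*t*Real.arccos (1/t) / ((t^2-1)^2 * Real.sqrt (t^2-1)) := by
      apply div_nonneg _ (by positivity)
      nlinarith
    have hT2nn : 0 ≤ 2*t/(t^2-1)^2 := by positivity
    have hT3nn : 0 ≤ 1/(t*(t^2-1)^2) := by positivity
    have habs : |gTwo t| ≤ 3*t*Real.arccos (1/t) / ((t^2-1)^2 * Real.sqrt (t^2-1))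
        + 2*t/(t^2-1)^2 + 1/(t*(t^2-1)^2) := by
      rw [gTwo, abs_le]
      constructor <;> linarith
    calc |gTwo t| ≤ 3*t*Real.arccos (1/t) / ((t^2-1)^2 * Real.sqrt (t^2-1))
        + 2*t/(t^2-1)^2 + 1/(t*(t^2-1)^2) := habs
      _ ≤ 600/t^2 + 100/t^2 + 100/t^2 := add_le_add (add_le_add hT1 hT2) hT3
      _ ≤ 1000/t^2 := by
          rw [← add_div, ← add_div]
          gcongr <;> norm_num

set_option maxHeartbeats 1000000 in
theorem stmt_3 (a b : ℝ) (ha : 0 < a) (hb : 0 < b)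
    (f : ℝ → ℝ) (hf : ∀ x : ℝ, 0 < x → 1 < f x ∧ sigmaF (f x) = x) :
    MeasureTheory.IntegrableOn
      (fun x => deriv (deriv gFun) (a * f x) / x^2) (Set.Ioo 0 b) := by
  have hfgt : ∀ x : ℝ, 0 < x → 1 < f x := fun x hx => (hf x hx).1
  have hfsig : ∀ x : ℝ, 0 < x → sigmaF (f x) = x := fun x hx => (hf x hx).2
  have hpif : ∀ x : ℝ, 0 < x → Real.pi ≤ x * f x := by
    intro x hx
    have h1 := hfgt x hx
    have hp := hFun_pos h1
    have hsig := hfsig x hx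
    rw [sigmaF_eq, div_eq_iff hp.ne'] at hsig
    have hlt := hFun_lt_self h1
    nlinarith
  have hanti : ∀ x y : ℝ, 0 < x → x < y → f y < f x := by
    intro x y hx hxy
    have hy : 0 < y := lt_trans hx hxy
    by_contra hcon
    push_neg at hcon
    have h1 := hfgt x hx
    have h2 := hfgt y hy
    have hm : hFun (f x) ≤ hFun (f y) :=
      hFun_strictMonoOn.monotoneOn (mem_Ici.2 h1.le) (mem_Ici.2 h2.le) hcon
    have hp1 := hFun_pos h1
    have hle : y ≤ x := by
      rw [← hfsig x hx, ← hfsig y hy, sigmaF_eq, sigmaF_eq]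
      exact div_le_div_of_nonneg_left Real.pi_pos.le hp1 hm
    linarith
  have hAnti : AntitoneOn f (Ioo 0 b) := by
    intro x hx y hy hxy
    rcases eq_or_lt_of_le hxy with h | h
    · rw [h]
    · exact (hanti x y hx.1 h).le
  have hfm : AEMeasurable f (volume.restrict (Ioo 0 b)) :=
    aemeasurable_restrict_of_antitoneOn measurableSet_Ioo hAnti
  have hFm : AEStronglyMeasurable (fun x => deriv (deriv gFun) (a * f x) / x^2)
      (volume.restrict (Ioo 0 b)) := by
    apply AEMeasurable.aestronglyMeasurable
    exact ((measurable_deriv (deriv gFun)).comp_aemeasurable (hfm.const_mul a)).div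
      ((measurable_id.pow_const 2).aemeasurable)
  set M := 1000/(a^2*Real.pi^2) with hM
  have hMnn : 0 ≤ M := by positivity
  have hbad : volume {x : ℝ | x ∈ Ioo 0 b ∧ a * f x = 1} = 0 := by
    apply Set.Subsingleton.measure_zero
    intro x hx y hy
    have hfe : f x = f y := mul_left_cancel₀ ha.ne' (hx.2.trans hy.2.symm)
    calc x = sigmaF (f x) := (hfsig x hx.1.1).symm
      _ = sigmaF (f y) := by rw [hfe]
      _ = y := hfsig y hy.1.1
  have hae : ∀ᵐ x ∂(volume.restrict (Ioo 0 b)),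
      ‖deriv (deriv gFun) (a * f x) / x^2‖ ≤ M := by
    rw [ae_restrict_iff' measurableSet_Ioo]
    have h0 : ∀ᵐ x : ℝ, x ∉ {x : ℝ | x ∈ Ioo 0 b ∧ a * f x = 1} :=
      measure_eq_zero_iff_ae_notMem.1 hbad
    filter_upwards [h0] with x hbadx hxio
    have hx0 : 0 < x := hxio.1
    have hfx1 := hfgt x hx0
    have hax : 0 < a * f x := mul_pos ha (by linarith)
    rcases lt_trichotomy (a * f x) 1 with h | h | h
    · rw [deriv_deriv_gFun_zero hax h]
      simpa using hMnn
    · exact absurd ⟨hxio, h⟩ hbadx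
    · rw [deriv_deriv_gFun h]
      have hb2 := gTwo_bound h
      rw [Real.norm_eq_abs, abs_div, abs_of_pos (pow_pos hx0 2)]
      have hπ := hpif x hx0
      have hxx : Real.pi^2 ≤ x^2*(f x)^2 := by nlinarith [Real.pi_pos]
      rw [div_le_iff₀ (pow_pos hx0 2), hM]
      have key : 1000/(a*f x)^2 ≤ 1000/(a^2*Real.pi^2)*x^2 := by
        rw [div_mul_eq_mul_div, div_le_div_iff₀ (by positivity) (by positivity)]
        nlinarith [mul_le_mul_of_nonneg_left hxx (by positivity : (0:ℝ) ≤ 1000*a^2)]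
      linarith
  have hconst : Integrable (fun _ : ℝ => M) (volume.restrict (Ioo 0 b)) :=
    integrableOn_const measure_Ioo_lt_top.ne
  exact Integrable.mono' hconst hFm hae
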